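/- Let n ≥ 1 and k ≥ 1 be integers and set a = k/(k + n). There is a constant C = C(k, n) such that for every r > 0 and every C^k function u on the ball B_{2r} ⊂ ℝ^n of radius 2r, one has ‖u‖_{L^∞(B_r)} ≤ C ( r^{−n} ‖u‖_{L¹(B_{2r})} + ‖u‖_{L¹(B_{2r})}^{a} ‖∇^k u‖_{L^∞(B_{2r})}^{1−a} ), where B_r is the concentric ball of radius r. -/

import Mathlib

open Metric MeasureTheory

section aux
variable {E F : Type*} [NormedAddCommGroup E] [NormedSpace ℝ E]
  [NormedAddCommGroup F] [NormedSpace ℝ F]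

lemma fderiv_shift (f : E → F) (c x : E) :
    fderiv ℝ (fun z => f (z + c)) x = fderiv ℝ f (x + c) := by
  by_cases hd : DifferentiableAt ℝ f (x + c)
  · have h1 : HasFDerivAt (fun z : E => z + c) (ContinuousLinearMap.id ℝ E) x :=
      (hasFDerivAt_id x).add_const c
    have h2 := (hd.hasFDerivAt.comp x h1).fderiv
    simpa [Function.comp_def] using h2
  · rw [fderiv_zero_of_not_differentiableAt hd, fderiv_zero_of_not_differentiableAt]
    intro hcon
    apply hd
    have h2 : DifferentiableAt ℝ (fun z : E => z - c) (x + c) :=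
      differentiableAt_id.sub_const c
    have hcon2 : DifferentiableAt ℝ (fun z => f (z + c)) ((fun z : E => z - c) (x + c)) := by
      simpa using hcon
    have h3 := hcon2.comp (x + c) h2
    have h4 : ((fun z => f (z + c)) ∘ fun z : E => z - c) = f := by
      funext z; simp [Function.comp]
    rwa [h4] at h3

lemma iteratedFDeriv_shift (f : E → F) (c : E) (j : ℕ) (x : E) :
    iteratedFDeriv ℝ j (fun z => f (z + c)) x = iteratedFDeriv ℝ j f (x + c) := by
  induction j generalizing x with
  | zero => ext m; simp
  | succ j IH =>
    ext m
    rw [iteratedFDeriv_succ_apply_left, iteratedFDeriv_succ_apply_left]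
    have hfun : iteratedFDeriv ℝ j (fun z => f (z + c))
        = fun z => iteratedFDeriv ℝ j f (z + c) := funext fun z => IH z
    rw [hfun, fderiv_shift (iteratedFDeriv ℝ j f) c x]

lemma diff_sum_identity {V : Type*} [AddCommGroup V] [Module ℝ V] (j : ℕ) (F : ℕ → V) :
    ∑ i ∈ Finset.range (j+2), ((-1:ℝ)^(j+1-i) * ((j+1).choose i : ℝ)) • F i
      = ∑ i ∈ Finset.range (j+1), ((-1:ℝ)^(j-i) * (j.choose i : ℝ)) • (F (i+1) - F i) := by
  have h1 : ∑ i ∈ Finset.range (j+1), ((-1:ℝ)^(j-i) * (j.choose i : ℝ)) • F (i+1)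
      = ∑ i ∈ Finset.range (j+2),
          (if i = 0 then (0:ℝ) else (-1:ℝ)^(j-(i-1)) * (j.choose (i-1) : ℝ)) • F i := by
    rw [Finset.sum_range_succ'
      (fun i => (if i = 0 then (0:ℝ) else (-1:ℝ)^(j-(i-1)) * (j.choose (i-1) : ℝ)) • F i) (j+1)]
    simp
  have h2 : ∑ i ∈ Finset.range (j+1), ((-1:ℝ)^(j-i) * (j.choose i : ℝ)) • F i
      = ∑ i ∈ Finset.range (j+2), ((-1:ℝ)^(j-i) * (j.choose i : ℝ)) • F i := by
    conv_rhs => rw [Finset.sum_range_succ]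
    simp [Nat.choose_succ_self]
  have h3 : ∑ i ∈ Finset.range (j+2), ((-1:ℝ)^(j+1-i) * ((j+1).choose i : ℝ)) • F i
      = ∑ i ∈ Finset.range (j+2),
          ((if i = 0 then (0:ℝ) else (-1:ℝ)^(j-(i-1)) * (j.choose (i-1) : ℝ)) • F i
            - ((-1:ℝ)^(j-i) * (j.choose i : ℝ)) • F i) := by
    apply Finset.sum_congr rfl
    intro i hi
    rw [← sub_smul]
    congr 1
    rcases i with _ | m
    · simp [pow_succ]
    · have hm : m ≤ j := by
        have := Finset.mem_range.mp hi; omega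
      have hch : (((j+1).choose (m+1)) : ℝ) = (j.choose m : ℝ) + (j.choose (m+1) : ℝ) := by
        rw [Nat.choose_succ_succ]; push_cast; ring
      rcases eq_or_lt_of_le hm with rfl | hmj
      · simp [Nat.choose_succ_self, Nat.choose_self, Nat.sub_self, Nat.succ_sub_succ]
      · obtain ⟨d, hd⟩ : ∃ d, j - (m+1) = d := ⟨_, rfl⟩
        have e1 : j + 1 - (m+1) = d + 1 := by omega
        have e2 : j - m = d + 1 := by omega
        simp only [if_neg (Nat.succ_ne_zero m), Nat.succ_sub_one, e1, e2, hd, hch, pow_succ]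
        ring
  rw [h3, Finset.sum_sub_distrib, ← h1, ← h2]
  simp [smul_sub, Finset.sum_sub_distrib]

lemma fd_bound (j : ℕ) : ∀ (s : Set E), IsOpen s → Convex ℝ s →
    ∀ f : E → F, ContDiffOn ℝ j f s → ∀ M : ℝ,
    (∀ y ∈ s, ‖iteratedFDeriv ℝ j f y‖ ≤ M) →
    ∀ x h : E, (∀ t : ℝ, 0 ≤ t → t ≤ (j:ℝ) → x + t • h ∈ s) →
    ‖∑ i ∈ Finset.range (j+1), ((-1:ℝ)^(j-i) * (j.choose i : ℝ)) • f (x + (i:ℝ) • h)‖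
      ≤ M * ‖h‖ ^ j := by
  induction j with
  | zero =>
    intro s hso hsc f hf M hM x h hseg
    have hx : x ∈ s := by simpa using hseg 0 le_rfl (by norm_num)
    have := hM x hx
    rw [norm_iteratedFDeriv_zero] at this
    simpa using this
  | succ j IH =>
    intro s hso hsc f hf M hM x h hseg
    have hj : ((j:ℕ) : WithTop ℕ∞) ≤ ((j+1:ℕ) : WithTop ℕ∞) := by exact_mod_cast Nat.le_succ j
    set s' : Set E := s ∩ ((fun z : E => z + h) ⁻¹' s) with hs'def
    have hso' : IsOpen s' := hso.inter (hso.preimage (continuous_id.add continuous_const))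
    have hsc2 : Convex ℝ ((fun z : E => z + h) ⁻¹' s) := by
      intro a ha b hb p q hp hq hpq
      simp only [Set.mem_preimage] at *
      have heq : p • a + q • b + h = p • (a + h) + q • (b + h) := by
        rw [smul_add, smul_add, add_add_add_comm, ← add_smul, hpq, one_smul]
      rw [heq]
      exact hsc ha hb hp hq hpq
    have hsc' : Convex ℝ s' := hsc.inter hsc2
    have hu' : UniqueDiffOn ℝ s' := hso'.uniqueDiffOn
    -- the translated and difference functions
    have htr : ContDiff ℝ ((j:ℕ) : WithTop ℕ∞) (fun z : E => z + h) := contDiff_id.add contDiff_const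
    have hfτ : ContDiffOn ℝ j (fun z => f (z + h)) s' :=
      (hf.of_le hj).comp htr.contDiffOn (fun z hz => hz.2)
    have hfneg : ContDiffOn ℝ j (fun z => -(f z)) s' :=
      ((hf.of_le hj).mono Set.inter_subset_left).neg
    set f' : E → F := fun z => f (z + h) + -(f z) with hf'def
    have hf' : ContDiffOn ℝ j f' s' := hfτ.add hfneg
    -- derivative of f' equals difference of derivatives
    have hdiffW : DifferentiableOn ℝ (iteratedFDeriv ℝ j f) s := by
      have h1 : DifferentiableOn ℝ (iteratedFDerivWithin ℝ j f s) s :=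
        hf.differentiableOn_iteratedFDerivWithin (by exact_mod_cast j.lt_succ_self)
          hso.uniqueDiffOn
      exact h1.congr fun z hz => (iteratedFDerivWithin_of_isOpen j hso hz).symm
    have hfd : ∀ z ∈ s, ‖fderivWithin ℝ (iteratedFDeriv ℝ j f) s z‖ ≤ M := by
      intro z hz
      rw [fderivWithin_of_isOpen hso hz, norm_fderiv_iteratedFDeriv]
      exact hM z hz
    have hbound' : ∀ y ∈ s', ‖iteratedFDeriv ℝ j f' y‖ ≤ M * ‖h‖ := by
      intro y hy
      have hy1 : y ∈ s := hy.1
      have hy2 : y + h ∈ s := hy.2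
      have e1 : iteratedFDeriv ℝ j f' y
          = iteratedFDeriv ℝ j f (y + h) - iteratedFDeriv ℝ j f y := by
        calc iteratedFDeriv ℝ j f' y
            = iteratedFDerivWithin ℝ j f' s' y :=
              (iteratedFDerivWithin_of_isOpen j hso' hy).symm
          _ = iteratedFDerivWithin ℝ j (fun z => f (z + h)) s' y
              + iteratedFDerivWithin ℝ j (fun z => -(f z)) s' y :=
              iteratedFDerivWithin_add_apply' (hfτ y hy) (hfneg y hy) hu' hy
          _ = iteratedFDerivWithin ℝ j (fun z => f (z + h)) s' y
              + -(iteratedFDerivWithin ℝ j f s' y) := by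
              rw [show (fun z => -(f z)) = -f from rfl,
                iteratedFDerivWithin_neg_apply hu' hy]
          _ = iteratedFDeriv ℝ j (fun z => f (z + h)) y + -(iteratedFDeriv ℝ j f y) := by
              rw [iteratedFDerivWithin_of_isOpen j hso' hy,
                iteratedFDerivWithin_of_isOpen j hso' hy]
          _ = iteratedFDeriv ℝ j f (y + h) - iteratedFDeriv ℝ j f y := by
              rw [iteratedFDeriv_shift f h j y, sub_eq_add_neg]
      rw [e1]
      have := hsc.norm_image_sub_le_of_norm_fderivWithin_le hdiffW hfd hy1 hy2
      simpa using this
    have hseg' : ∀ t : ℝ, 0 ≤ t → t ≤ (j:ℝ) → x + t • h ∈ s' := by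
      intro t ht htj
      constructor
      · exact hseg t ht (le_trans htj (by push_cast; linarith))
      · have h1 := hseg (t+1) (by linarith) (by push_cast; linarith)
        simp only [Set.mem_preimage]
        have : x + t • h + h = x + (t + 1) • h := by
          rw [add_smul, one_smul, add_assoc]
        rw [this]
        exact h1
    have hIH := IH s' hso' hsc' f' hf' (M * ‖h‖) hbound' x h hseg'
    have hgoal : ∑ i ∈ Finset.range (j+2), ((-1:ℝ)^(j+1-i) * ((j+1).choose i : ℝ)) • f (x + (i:ℝ) • h)
        = ∑ i ∈ Finset.range (j+1), ((-1:ℝ)^(j-i) * (j.choose i : ℝ)) • f' (x + (i:ℝ) • h) := by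
      rw [diff_sum_identity j (fun i => f (x + (i:ℝ) • h))]
      apply Finset.sum_congr rfl
      intro i _
      congr 1
      have hcast : x + ((i+1 : ℕ) : ℝ) • h = x + (i:ℝ) • h + h := by
        push_cast
        rw [add_smul, one_smul, add_assoc]
      rw [hcast, sub_eq_add_neg]
    calc ‖∑ i ∈ Finset.range (j+1+1), ((-1:ℝ)^(j+1-i) * ((j+1).choose i : ℝ)) • f (x + (i:ℝ) • h)‖
        = ‖∑ i ∈ Finset.range (j+1), ((-1:ℝ)^(j-i) * (j.choose i : ℝ)) • f' (x + (i:ℝ) • h)‖ := by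
          rw [hgoal]
      _ ≤ M * ‖h‖ * ‖h‖ ^ j := hIH
      _ = M * ‖h‖ ^ (j+1) := by ring
end aux

variable {E : Type*} [NormedAddCommGroup E] [NormedSpace ℝ E] [FiniteDimensional ℝ E]
  [MeasurableSpace E] [BorelSpace E]

lemma step_A (μ : Measure E) [μ.IsAddHaarMeasure] {k : ℕ} (hk : 1 ≤ k) {r ρ : ℝ}
    (hr : 0 < r) (hρ : 0 < ρ)
    (hρr : (k:ℝ) * ρ ≤ r) {u : E → ℝ}
    (hu : ContDiffOn ℝ k u (ball (0 : E) (2*r)))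
    (hint : IntegrableOn u (ball (0 : E) (2*r)) μ)
    {B : ℝ} (hB : 0 ≤ B)
    (hDB : ∀ y ∈ ball (0 : E) (2*r), ‖iteratedFDeriv ℝ k u y‖ ≤ B)
    {x : E} (hx : x ∈ ball (0 : E) r) :
    |u x| ≤ B * ρ^k
      + (2^k / (μ (ball (0 : E) 1)).toReal)
        * ((∫ y in ball (0 : E) (2*r), |u y| ∂μ) / ρ^(Module.finrank ℝ E)) := by
  set d : ℕ := Module.finrank ℝ E with hddef
  set I : ℝ := ∫ y in ball (0 : E) (2*r), |u y| ∂μ with hIdef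
  set ω : ℝ := (μ (ball (0 : E) 1)).toReal with hωdef
  have hω : 0 < ω :=
    ENNReal.toReal_pos (measure_ball_pos μ 0 one_pos).ne' measure_ball_lt_top.ne
  have hI : 0 ≤ I := integral_nonneg fun y => abs_nonneg _
  have hk' : (0:ℝ) < k := by exact_mod_cast hk
  -- the indicator function
  set g : E → ℝ := (ball x ((k:ℝ)*ρ)).indicator (fun y => |u y|) with hgdef
  have hsub : ball x ((k:ℝ)*ρ) ⊆ ball (0:E) (2*r) := by
    intro y hy
    have h1 : dist y x < (k:ℝ)*ρ := mem_ball.mp hy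
    have h2 : dist x 0 < r := mem_ball.mp hx
    have h3 : dist y (0:E) ≤ dist y x + dist x 0 := dist_triangle _ _ _
    have : dist y (0:E) < 2*r := by linarith
    exact mem_ball.mpr this
  have habs_int : IntegrableOn (fun y => |u y|) (ball (0:E) (2*r)) μ := hint.abs
  have hgint : Integrable g μ :=
    (integrable_indicator_iff measurableSet_ball).2 (habs_int.mono_set hsub)
  have hgnonneg : ∀ y, 0 ≤ g y := fun y => Set.indicator_nonneg (fun z _ => abs_nonneg _) y
  -- integrability of translates
  have hint_i : ∀ i : ℕ, Integrable (fun h : E => g (x + ((i+1:ℕ):ℝ) • h)) μ := by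
    intro i
    have h1 : Integrable (fun z : E => g (x + z)) μ := hgint.comp_add_left x
    have h2 : ((i+1:ℕ):ℝ) ≠ 0 := by positivity
    exact h1.comp_smul h2
  -- pointwise bound
  have hfd : ∀ h : E, h ∈ ball (0:E) ρ →
      |u x| ≤ B*ρ^k + ∑ i ∈ Finset.range k, (k.choose (i+1):ℝ) * g (x + ((i+1:ℕ):ℝ) • h) := by
    intro h hmem
    have hhn : ‖h‖ < ρ := by simpa using mem_ball_zero_iff.mp hmem
    have hseg : ∀ t:ℝ, 0 ≤ t → t ≤ (k:ℝ) → x + t • h ∈ ball (0:E) (2*r) := by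
      intro t ht htk
      rw [mem_ball_zero_iff]
      have h1 : ‖x + t•h‖ ≤ ‖x‖ + ‖t•h‖ := norm_add_le _ _
      have h2 : ‖t•h‖ = t*‖h‖ := by rw [norm_smul, Real.norm_of_nonneg ht]
      have h3 : ‖x‖ < r := mem_ball_zero_iff.mp hx
      have h4 : t*‖h‖ ≤ (k:ℝ)*ρ :=
        mul_le_mul htk hhn.le (norm_nonneg _) (le_of_lt hk')
      have h5 : t*‖h‖ ≤ r := le_trans h4 hρr
      linarith
    have hS := fd_bound k (ball (0:E) (2*r)) isOpen_ball (convex_ball _ _) u hu B hDB x h hseg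
    set S : ℝ := ∑ i ∈ Finset.range (k+1), ((-1:ℝ)^(k-i) * (k.choose i : ℝ)) • u (x + (i:ℝ) • h)
      with hSdef
    set T : ℝ := ∑ i ∈ Finset.range k,
        ((-1:ℝ)^(k-(i+1)) * (k.choose (i+1) : ℝ)) • u (x + ((i+1:ℕ):ℝ) • h) with hTdef
    have hsplit := Finset.sum_range_succ'
      (fun i => ((-1:ℝ)^(k-i) * (k.choose i : ℝ)) • u (x + (i:ℝ) • h)) k
    have h0 : ((-1:ℝ)^k) * u x = S - T := by
      rw [hSdef, hsplit]
      simp only [Nat.cast_zero, zero_smul, add_zero, Nat.sub_zero, Nat.choose_zero_right,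
        Nat.cast_one, mul_one, smul_eq_mul]
      rw [hTdef]
      simp only [smul_eq_mul]
      push_cast
      ring
    have h1 : |u x| = |((-1:ℝ)^k) * u x| := by
      rw [abs_mul, abs_pow, abs_neg, abs_one, one_pow, one_mul]
    have h2 : |S - T| ≤ |S| + |T| := abs_sub S T
    have h3 : |S| ≤ B*ρ^k := by
      have hSn : ‖S‖ ≤ B * ‖h‖^k := hS
      have : B * ‖h‖^k ≤ B * ρ^k :=
        mul_le_mul_of_nonneg_left (pow_le_pow_left₀ (norm_nonneg _) hhn.le k) hB
      calc |S| = ‖S‖ := (Real.norm_eq_abs S).symm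
        _ ≤ B * ‖h‖^k := hSn
        _ ≤ B * ρ^k := this
    have h4 : |T| ≤ ∑ i ∈ Finset.range k, (k.choose (i+1):ℝ) * g (x + ((i+1:ℕ):ℝ) • h) := by
      refine (Finset.abs_sum_le_sum_abs _ _).trans ?_
      apply Finset.sum_le_sum
      intro i hi
      have hik : i + 1 ≤ k := Finset.mem_range.mp hi
      have hmemball : x + ((i+1:ℕ):ℝ) • h ∈ ball x ((k:ℝ)*ρ) := by
        rw [mem_ball_iff_norm, add_sub_cancel_left, norm_smul, Real.norm_of_nonneg (by positivity)]
        have hc1 : ((i+1:ℕ):ℝ) ≤ (k:ℝ) := by exact_mod_cast hik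
        calc ((i+1:ℕ):ℝ) * ‖h‖ ≤ (k:ℝ) * ‖h‖ :=
              mul_le_mul_of_nonneg_right hc1 (norm_nonneg _)
          _ < (k:ℝ)*ρ := by
              apply mul_lt_mul_of_pos_left hhn hk'
      have hgeq : g (x + ((i+1:ℕ):ℝ) • h) = |u (x + ((i+1:ℕ):ℝ) • h)| :=
        Set.indicator_of_mem hmemball _
      rw [smul_eq_mul, abs_mul, abs_mul, abs_pow, abs_neg, abs_one, one_pow, one_mul,
        Nat.abs_cast, hgeq]
    calc |u x| = |((-1:ℝ)^k) * u x| := h1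
      _ = |S - T| := by rw [h0]
      _ ≤ |S| + |T| := h2
      _ ≤ B*ρ^k + ∑ i ∈ Finset.range k, (k.choose (i+1):ℝ) * g (x + ((i+1:ℕ):ℝ) • h) :=
          add_le_add h3 h4
  -- integrate over h ∈ ball 0 ρ
  set μρ : ℝ := (μ (ball (0:E) ρ)).toReal with hμρdef
  have hμρ : 0 < μρ :=
    ENNReal.toReal_pos (measure_ball_pos μ 0 hρ).ne' measure_ball_lt_top.ne
  have hterm : ∀ i : ℕ, (∫ h in ball (0:E) ρ, g (x + ((i+1:ℕ):ℝ) • h) ∂μ) ≤ I := by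
    intro i
    have hgI : ∫ z, g z ∂μ = ∫ y in ball x ((k:ℝ)*ρ), |u y| ∂μ :=
      integral_indicator measurableSet_ball
    have hgI2 : (∫ z, g z ∂μ) ≤ I := by
      rw [hgI, hIdef]
      exact setIntegral_mono_set habs_int
        (Filter.Eventually.of_forall fun y => abs_nonneg _) (HasSubset.Subset.eventuallyLE hsub)
    have hgI0 : 0 ≤ ∫ z, g z ∂μ := integral_nonneg hgnonneg
    have hstep1 : (∫ h in ball (0:E) ρ, g (x + ((i+1:ℕ):ℝ) • h) ∂μ)
        ≤ ∫ h : E, g (x + ((i+1:ℕ):ℝ) • h) ∂μ :=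
      setIntegral_le_integral (hint_i i)
        (Filter.Eventually.of_forall fun h => hgnonneg _)
    have hstep2 : (∫ h : E, g (x + ((i+1:ℕ):ℝ) • h) ∂μ)
        = |((((i+1:ℕ):ℝ)) ^ d)⁻¹| * ∫ z : E, g (x + z) ∂μ := by
      have := MeasureTheory.Measure.integral_comp_smul μ
        (fun z => g (x + z)) (((i+1:ℕ):ℝ))
      simpa [smul_eq_mul, hddef] using this
    have hstep3 : (∫ z : E, g (x + z) ∂μ) = ∫ z, g z ∂μ := integral_add_left_eq_self g x
    have hfac : |((((i+1:ℕ):ℝ)) ^ d)⁻¹| ≤ 1 := by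
      rw [abs_of_nonneg (by positivity)]
      have h1 : (1:ℝ) ≤ ((i+1:ℕ):ℝ) := by exact_mod_cast Nat.succ_le_succ (Nat.zero_le i)
      have h2 : (1:ℝ) ≤ (((i+1:ℕ):ℝ)) ^ d := one_le_pow₀ h1
      exact inv_le_one_of_one_le₀ h2
    calc (∫ h in ball (0:E) ρ, g (x + ((i+1:ℕ):ℝ) • h) ∂μ)
        ≤ ∫ h : E, g (x + ((i+1:ℕ):ℝ) • h) ∂μ := hstep1
      _ = |((((i+1:ℕ):ℝ)) ^ d)⁻¹| * ∫ z, g z ∂μ := by rw [hstep2, hstep3]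
      _ ≤ 1 * ∫ z, g z ∂μ := mul_le_mul_of_nonneg_right hfac hgI0
      _ = ∫ z, g z ∂μ := one_mul _
      _ ≤ I := hgI2
  have hintRHS : ∀ i ∈ Finset.range k,
      IntegrableOn (fun h : E => (k.choose (i+1):ℝ) * g (x + ((i+1:ℕ):ℝ) • h))
        (ball (0:E) ρ) μ := by
    intro i _
    exact ((hint_i i).const_mul _).integrableOn
  have hmain : μρ * |u x| ≤ μρ * (B*ρ^k) + 2^k * I := by
    have hL : (∫ _ in ball (0:E) ρ, |u x| ∂μ) = μρ * |u x| := by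
      rw [setIntegral_const, smul_eq_mul]
      rfl
    have hmono : (∫ _ in ball (0:E) ρ, |u x| ∂μ)
        ≤ ∫ h in ball (0:E) ρ,
            (B*ρ^k + ∑ i ∈ Finset.range k, (k.choose (i+1):ℝ) * g (x + ((i+1:ℕ):ℝ) • h)) ∂μ := by
      apply setIntegral_mono_on
      · exact integrableOn_const measure_ball_lt_top.ne
      · exact (integrableOn_const measure_ball_lt_top.ne).add
          (MeasureTheory.integrable_finset_sum _ hintRHS)
      · exact measurableSet_ball
      · intro h hh
        exact hfd h hh
    have hsplit2 : (∫ h in ball (0:E) ρ,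
          (B*ρ^k + ∑ i ∈ Finset.range k, (k.choose (i+1):ℝ) * g (x + ((i+1:ℕ):ℝ) • h)) ∂μ)
        = μρ * (B*ρ^k)
          + ∑ i ∈ Finset.range k,
              (k.choose (i+1):ℝ) * ∫ h in ball (0:E) ρ, g (x + ((i+1:ℕ):ℝ) • h) ∂μ := by
      rw [integral_add (integrableOn_const measure_ball_lt_top.ne :
          IntegrableOn (fun _ => B*ρ^k) (ball (0:E) ρ) μ)
        (MeasureTheory.integrable_finset_sum _ hintRHS),
        setIntegral_const, smul_eq_mul, Measure.real,
        MeasureTheory.integral_finset_sum _ hintRHS]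
      congr 1
      apply Finset.sum_congr rfl
      intro i _
      rw [integral_const_mul]
    have hsum : ∑ i ∈ Finset.range k,
          (k.choose (i+1):ℝ) * ∫ h in ball (0:E) ρ, g (x + ((i+1:ℕ):ℝ) • h) ∂μ
        ≤ 2^k * I := by
      have h1 : ∑ i ∈ Finset.range k,
            (k.choose (i+1):ℝ) * ∫ h in ball (0:E) ρ, g (x + ((i+1:ℕ):ℝ) • h) ∂μ
          ≤ ∑ i ∈ Finset.range k, (k.choose (i+1):ℝ) * I := by
        apply Finset.sum_le_sum
        intro i _
        exact mul_le_mul_of_nonneg_left (hterm i) (by positivity)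
      have h2 : ∑ i ∈ Finset.range k, (k.choose (i+1):ℝ) * I
          = (∑ i ∈ Finset.range k, (k.choose (i+1):ℝ)) * I := by
        rw [Finset.sum_mul]
      have h3 : (∑ i ∈ Finset.range k, (k.choose (i+1):ℝ)) ≤ 2^k := by
        have hnat := Nat.sum_range_choose k
        have hcast := Finset.sum_range_succ' (fun i => (k.choose i : ℝ)) k
        have hc2 : ∑ i ∈ Finset.range (k+1), (k.choose i : ℝ) = 2^k := by
          exact_mod_cast congrArg (Nat.cast : ℕ → ℝ) hnat
        rw [hcast] at hc2
        simp only [Nat.choose_zero_right, Nat.cast_one] at hc2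
        linarith
      calc _ ≤ (∑ i ∈ Finset.range k, (k.choose (i+1):ℝ)) * I := by rw [← h2]; exact h1
        _ ≤ 2^k * I := mul_le_mul_of_nonneg_right h3 hI
    calc μρ * |u x| = ∫ _ in ball (0:E) ρ, |u x| ∂μ := hL.symm
      _ ≤ _ := hmono
      _ = μρ * (B*ρ^k) + ∑ i ∈ Finset.range k,
            (k.choose (i+1):ℝ) * ∫ h in ball (0:E) ρ, g (x + ((i+1:ℕ):ℝ) • h) ∂μ := hsplit2
      _ ≤ μρ * (B*ρ^k) + 2^k * I := by linarith [hsum]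
  -- compute μρ
  have hμρ_eq : μρ = ρ^d * ω := by
    rw [hμρdef, Measure.addHaar_ball_of_pos μ 0 hρ]
    rw [ENNReal.toReal_mul, ENNReal.toReal_ofReal (by positivity)]
  have hρn : (0:ℝ) < ρ^d := by positivity
  rw [hμρ_eq] at hmain
  have hfinal : |u x| ≤ B*ρ^k + 2^k * I / (ρ^d * ω) := by
    have h1 : (ρ^d * ω) * |u x| ≤ (ρ^d * ω) * (B*ρ^k + 2^k * I / (ρ^d * ω)) := by
      have h2 : (ρ^d * ω) * (2^k * I / (ρ^d * ω)) = 2^k * I := by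
        field_simp
      calc (ρ^d * ω) * |u x| ≤ (ρ^d * ω) * (B*ρ^k) + 2^k * I := hmain
        _ = (ρ^d * ω) * (B*ρ^k) + (ρ^d * ω) * (2^k * I / (ρ^d * ω)) := by rw [h2]
        _ = (ρ^d * ω) * (B*ρ^k + 2^k * I / (ρ^d * ω)) := by ring
    exact le_of_mul_le_mul_left h1 (by positivity)
  calc |u x| ≤ B*ρ^k + 2^k * I / (ρ^d * ω) := hfinal
    _ = B*ρ^k + (2^k/ω) * (I/ρ^d) := by field_simp


set_option maxHeartbeats 1000000 in
/-- **`L¹`–`C^k` interpolation inequality** (Lemma B.2, first inequality): with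
`a = k/(k+n)` there is `C = C(k,n)` such that for every `r > 0` and every `C^k` function
`u` on `B_{2r} ⊆ ℝⁿ`,
`‖u‖_{L^∞(B_r)} ≤ C ( r^{−n} ‖u‖_{L¹(B_{2r})} + ‖u‖_{L¹(B_{2r})}^a ‖∇^k u‖_{L^∞(B_{2r})}^{1−a} )`. -/
theorem stmt_5 (n k : ℕ) (hn : 1 ≤ n) (hk : 1 ≤ k) :
    ∃ C : ℝ, 0 < C ∧
      ∀ r : ℝ, 0 < r →
        ∀ u : EuclideanSpace ℝ (Fin n) → ℝ,
          ContDiffOn ℝ k u (ball (0 : EuclideanSpace ℝ (Fin n)) (2 * r)) →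
          IntegrableOn u (ball (0 : EuclideanSpace ℝ (Fin n)) (2 * r)) →
          ∀ B : ℝ, 0 ≤ B →
            (∀ x ∈ ball (0 : EuclideanSpace ℝ (Fin n)) (2 * r),
              ‖iteratedFDerivWithin ℝ k u (ball (0 : EuclideanSpace ℝ (Fin n)) (2 * r)) x‖
                ≤ B) →
            ∀ x ∈ ball (0 : EuclideanSpace ℝ (Fin n)) r,
              |u x| ≤ C * (r ^ (-(n : ℝ))
                    * (∫ y in ball (0 : EuclideanSpace ℝ (Fin n)) (2 * r), |u y|)
                  + (∫ y in ball (0 : EuclideanSpace ℝ (Fin n)) (2 * r), |u y|)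
                      ^ ((k : ℝ) / ((k : ℝ) + n))
                    * B ^ (1 - (k : ℝ) / ((k : ℝ) + n))) := by
  have hω : 0 < (volume (ball (0 : EuclideanSpace ℝ (Fin n)) 1)).toReal :=
    ENNReal.toReal_pos (measure_ball_pos volume 0 one_pos).ne' measure_ball_lt_top.ne
  set ω : ℝ := (volume (ball (0 : EuclideanSpace ℝ (Fin n)) 1)).toReal with hωdef
  set c1 : ℝ := 2^k / ω with hc1def
  have hc1 : 0 < c1 := by positivity
  set a : ℝ := (k : ℝ) / ((k : ℝ) + n) with hadef
  have hk' : (0:ℝ) < k := by exact_mod_cast hk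
  have hn' : (0:ℝ) < n := by exact_mod_cast hn
  have hkn : (0:ℝ) < (k:ℝ) + n := by linarith
  have ha0 : 0 < a := by positivity
  have ha1 : a < 1 := by
    rw [hadef, div_lt_one hkn]; linarith
  refine ⟨(c1 + 1) * ((k:ℝ)^n + 1), by positivity, ?_⟩
  intro r hr u hu hint B hB hDB x hx
  set I : ℝ := ∫ y in ball (0 : EuclideanSpace ℝ (Fin n)) (2*r), |u y| with hIdef
  have hI : 0 ≤ I := integral_nonneg fun y => abs_nonneg _
  set C : ℝ := (c1 + 1) * ((k:ℝ)^n + 1) with hCdef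
  have hC1 : c1 + 1 ≤ C := by
    rw [hCdef]
    nlinarith [pow_pos hk' n]
  have hCkn : (c1 + 1) * (k:ℝ)^n ≤ C := by
    rw [hCdef]
    nlinarith [hc1]
  have hCpos : 0 < C := by positivity
  -- global derivative bound
  have hDB' : ∀ y ∈ ball (0 : EuclideanSpace ℝ (Fin n)) (2*r),
      ‖iteratedFDeriv ℝ k u y‖ ≤ B := by
    intro y hy
    rw [← iteratedFDerivWithin_of_isOpen k isOpen_ball hy]
    exact hDB y hy
  -- the key inequality from step A
  have hfrk : Module.finrank ℝ (EuclideanSpace ℝ (Fin n)) = n := finrank_euclideanSpace_fin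
  have key : ∀ ρ : ℝ, 0 < ρ → (k:ℝ) * ρ ≤ r → |u x| ≤ B * ρ^k + c1 * (I / ρ^n) := by
    intro ρ hρ hρr
    have := step_A volume hk hr hρ hρr hu hint hB hDB' hx
    rwa [hfrk] at this
  -- rpow facts
  have hrn : r ^ (-(n:ℝ)) = (r^n)⁻¹ := by
    rw [Real.rpow_neg hr.le, Real.rpow_natCast]
  have hX : 0 ≤ I ^ a * B ^ (1 - a) :=
    mul_nonneg (Real.rpow_nonneg hI _) (Real.rpow_nonneg hB _)
  have hrk : 0 < r / k := div_pos hr hk'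
  by_cases hcase : B * (r/(k:ℝ))^(k+n) ≤ I
  · -- take ρ = r / k
    have hρr : (k:ℝ) * (r/(k:ℝ)) ≤ r := by
      rw [mul_div_cancel₀ r hk'.ne']
    have h1 := key (r/(k:ℝ)) hrk hρr
    have h2 : B * (r/(k:ℝ))^k ≤ I / (r/(k:ℝ))^n := by
      rw [le_div_iff₀ (by positivity)]
      calc B * (r/(k:ℝ))^k * (r/(k:ℝ))^n = B * (r/(k:ℝ))^(k+n) := by rw [pow_add]; ring
        _ ≤ I := hcase
    have h3 : I / (r/(k:ℝ))^n = I * (k:ℝ)^n / r^n := by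
      rw [div_pow]
      field_simp
    have h4 : |u x| ≤ (c1 + 1) * (I * (k:ℝ)^n / r^n) := by
      rw [h3] at h1 h2
      nlinarith [h1, h2]
    have h5 : (c1 + 1) * (I * (k:ℝ)^n / r^n) ≤ C * (r ^ (-(n:ℝ)) * I) := by
      rw [hrn]
      have h6 : (c1 + 1) * (I * (k:ℝ)^n / r^n) = ((c1+1) * (k:ℝ)^n) * (I / r^n) := by ring
      have h7 : C * ((r^n)⁻¹ * I) = C * (I / r^n) := by ring
      rw [h6, h7]
      exact mul_le_mul_of_nonneg_right hCkn (by positivity)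
    calc |u x| ≤ (c1 + 1) * (I * (k:ℝ)^n / r^n) := h4
      _ ≤ C * (r ^ (-(n:ℝ)) * I) := h5
      _ ≤ C * (r ^ (-(n:ℝ)) * I + I ^ a * B ^ (1 - a)) := by nlinarith [hX, hCpos]
  · push_neg at hcase
    have hBpos : 0 < B := by
      by_contra hB0
      push_neg at hB0
      have : B = 0 := le_antisymm hB0 hB
      rw [this] at hcase
      simp at hcase
      linarith
    rcases eq_or_lt_of_le hI with hI0 | hIpos
    · -- I = 0
      have hI0' : I = 0 := hI0.symm
      have hux : |u x| ≤ 0 := by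
        apply le_of_forall_pos_le_add
        intro ε hε
        set ρ : ℝ := min (r/(k:ℝ)) ((ε/B) ^ ((k:ℝ)⁻¹)) with hρdef
        have hρpos : 0 < ρ :=
          lt_min hrk (Real.rpow_pos_of_pos (div_pos hε hBpos) _)
        have hρr : (k:ℝ) * ρ ≤ r := by
          have := min_le_left (r/(k:ℝ)) ((ε/B) ^ ((k:ℝ)⁻¹))
          calc (k:ℝ) * ρ ≤ (k:ℝ) * (r/(k:ℝ)) :=
                mul_le_mul_of_nonneg_left this hk'.le
            _ = r := by rw [mul_div_cancel₀ r hk'.ne']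
        have h1 := key ρ hρpos hρr
        rw [hI0', zero_div, mul_zero, add_zero] at h1
        have h2 : ρ^k ≤ ε/B := by
          have h3 : ρ ≤ (ε/B) ^ ((k:ℝ)⁻¹) := min_le_right _ _
          have h4 : ρ^k ≤ ((ε/B) ^ ((k:ℝ)⁻¹))^k :=
            pow_le_pow_left₀ hρpos.le h3 k
          have h5 : ((ε/B) ^ ((k:ℝ)⁻¹))^k = ε/B := by
            rw [← Real.rpow_natCast ((ε/B) ^ ((k:ℝ)⁻¹)) k,
              ← Real.rpow_mul (le_of_lt (div_pos hε hBpos)),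
              inv_mul_cancel₀ hk'.ne', Real.rpow_one]
          rwa [h5] at h4
        have h6 : B * ρ^k ≤ ε := by
          calc B * ρ^k ≤ B * (ε/B) := mul_le_mul_of_nonneg_left h2 hB
            _ = ε := by field_simp
        linarith
      have hRHS : C * (r ^ (-(n:ℝ)) * I + I ^ a * B ^ (1 - a)) = 0 := by
        rw [hI0', Real.zero_rpow ha0.ne']
        ring
      rw [hRHS]
      exact hux
    · -- 0 < I
      set ρ0 : ℝ := (I/B) ^ (((k:ℝ)+n)⁻¹) with hρ0def
      have hIB : 0 < I/B := div_pos hIpos hBpos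
      have hρ0 : 0 < ρ0 := Real.rpow_pos_of_pos hIB _
      have hρ0r : (k:ℝ) * ρ0 ≤ r := by
        have h1 : I/B < (r/(k:ℝ))^(k+n) := (div_lt_iff₀ hBpos).mpr (by linarith [hcase])
        have h2 : ρ0 ≤ ((r/(k:ℝ))^(k+n) : ℝ) ^ (((k:ℝ)+n)⁻¹) :=
          Real.rpow_le_rpow hIB.le h1.le (by positivity)
        have h3 : ((r/(k:ℝ))^(k+n) : ℝ) ^ (((k:ℝ)+n)⁻¹) = r/(k:ℝ) := by
          rw [← Real.rpow_natCast (r/(k:ℝ)) (k+n), ← Real.rpow_mul hrk.le]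
          push_cast
          rw [mul_inv_cancel₀ hkn.ne', Real.rpow_one]
        rw [h3] at h2
        calc (k:ℝ) * ρ0 ≤ (k:ℝ) * (r/(k:ℝ)) := mul_le_mul_of_nonneg_left h2 hk'.le
          _ = r := by rw [mul_div_cancel₀ r hk'.ne']
      have h1 := key ρ0 hρ0 hρ0r
      have hae : a = (k:ℝ) * ((k:ℝ)+n)⁻¹ := by
        rw [hadef, div_eq_mul_inv]
      have h1ae : 1 - a = (n:ℝ) * ((k:ℝ)+n)⁻¹ := by
        rw [hadef]
        field_simp
        ring
      have hρ0k : ρ0^k = (I/B) ^ a := by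
        rw [hρ0def, ← Real.rpow_natCast ((I/B) ^ (((k:ℝ)+n)⁻¹)) k,
          ← Real.rpow_mul hIB.le, hae]
        congr 1
        ring
      have hρ0n : ρ0^n = (I/B) ^ (1-a) := by
        rw [hρ0def, ← Real.rpow_natCast ((I/B) ^ (((k:ℝ)+n)⁻¹)) n,
          ← Real.rpow_mul hIB.le, h1ae]
        congr 1
        ring
      have e1 : B * ρ0^k = I ^ a * B ^ (1-a) := by
        rw [hρ0k, Real.div_rpow hI hBpos.le, Real.rpow_sub hBpos, Real.rpow_one]
        have hBa : 0 < B ^ a := Real.rpow_pos_of_pos hBpos a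
        field_simp
      have e2 : I / ρ0^n = I ^ a * B ^ (1-a) := by
        rw [hρ0n, Real.div_rpow hI hBpos.le]
        have hIa : 0 < I ^ (1-a) := Real.rpow_pos_of_pos hIpos _
        rw [div_div_eq_mul_div, div_eq_iff hIa.ne']
        rw [mul_comm (I ^ a) (B ^ (1-a)), mul_assoc, ← Real.rpow_add hIpos]
        have hone : a + (1-a) = 1 := by ring
        rw [hone, Real.rpow_one]
        ring
      rw [e1, e2] at h1
      have hfirst : 0 ≤ r ^ (-(n:ℝ)) * I :=
        mul_nonneg (Real.rpow_nonneg hr.le _) hI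
      calc |u x| ≤ (c1 + 1) * (I ^ a * B ^ (1-a)) := by linarith
        _ ≤ C * (r ^ (-(n:ℝ)) * I + I ^ a * B ^ (1 - a)) := by
            nlinarith [mul_nonneg hCpos.le hfirst, mul_nonneg (sub_nonneg.mpr hC1) hX]
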